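/- Let δ ∈ (0,1), θ = (1 − √(1−(1−δ)²))/(1 + √(1−(1−δ)²)), η̃ ∈ [(1+θ)/2, 1), z ∈ (0,1] with z² ≥ δ − δ²/2. Let r₁ = √(η̃ − z²) + iz, r₂ = √(η̃ − z²) − iz. Then |(1 − r₁)/(r₁ − r₂)|² ≤ 7/4. -/

import Mathlib

set_option maxHeartbeats 1600000 in
/-- Bound on the coefficient in the loopless Chebyshev acceleration analysis:
|(1 − r₁)/(r₁ − r₂)|² ≤ 7/4. -/
theorem stmt14 (δ θ ηt z : ℝ) (h0 : 0 < δ) (h1 : δ < 1)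
    (hθ : θ = (1 - Real.sqrt (1 - (1 - δ) ^ 2)) / (1 + Real.sqrt (1 - (1 - δ) ^ 2)))
    (hη1 : (1 + θ) / 2 ≤ ηt) (hη2 : ηt < 1)
    (hz0 : 0 < z) (hz1 : z ≤ 1) (hzδ : δ - δ ^ 2 / 2 ≤ z ^ 2)
    (r₁ r₂ : ℂ)
    (hr₁ : r₁ = (Real.sqrt (ηt - z ^ 2) : ℂ) + (z : ℂ) * Complex.I)
    (hr₂ : r₂ = (Real.sqrt (ηt - z ^ 2) : ℂ) - (z : ℂ) * Complex.I) :
    (‖(1 - r₁) / (r₁ - r₂)‖) ^ 2 ≤ 7 / 4 := by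
  obtain ⟨s, hs⟩ : ∃ s, Real.sqrt (1 - (1 - δ) ^ 2) = s := ⟨_, rfl⟩
  obtain ⟨a, ha⟩ : ∃ a, Real.sqrt (ηt - z ^ 2) = a := ⟨_, rfl⟩
  rw [hs] at hθ
  rw [ha] at hr₁ hr₂
  have hs0 : 0 ≤ s := hs ▸ Real.sqrt_nonneg _
  have hs2 : s ^ 2 = 2 * δ - δ ^ 2 := by
    rw [← hs, Real.sq_sqrt (by nlinarith)]; ring
  have hs1 : s ≤ 1 := by nlinarith
  have hθs : θ * (1 + s) = 1 - s := by
    rw [hθ]; field_simp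
  have hθ0 : 0 ≤ θ := by
    rw [hθ]; exact div_nonneg (by linarith) (by linarith)
  have hθ1 : θ ≤ 1 := by nlinarith [mul_nonneg hθ0 hs0]
  -- 1 - ηt ≤ s
  have hu : 1 - ηt ≤ s := by
    nlinarith [mul_nonneg (sub_nonneg.mpr hθ1) hs0]
  have ha0 : 0 ≤ a := ha ▸ Real.sqrt_nonneg _
  have hs2z : s ^ 2 ≤ 2 * z ^ 2 := by nlinarith
  have hz21 : z ^ 2 ≤ 1 := by nlinarith
  have hz4 : z ^ 4 ≤ z ^ 2 := by
    nlinarith [mul_le_mul_of_nonneg_right hz21 (sq_nonneg z)]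
  -- key real inequality : (1-a)^2 + z^2 ≤ 7 * z^2
  have key : (1 - a) ^ 2 + z ^ 2 ≤ 7 * z ^ 2 := by
    rcases le_or_gt (z ^ 2) ηt with hc | hc
    · have ha2 : a ^ 2 = ηt - z ^ 2 := by
        rw [← ha, Real.sq_sqrt (by linarith)]
      have ha1 : a ≤ 1 := by
        rw [← ha]
        calc Real.sqrt (ηt - z ^ 2) ≤ Real.sqrt 1 := Real.sqrt_le_sqrt (by nlinarith)
          _ = 1 := Real.sqrt_one
      have h1a : 1 - a ≤ s + z ^ 2 := by
        nlinarith [mul_nonneg ha0 (sub_nonneg.mpr ha1)]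
      have h1a2 : (1 - a) ^ 2 ≤ (s + z ^ 2) ^ 2 :=
        pow_le_pow_left₀ (by linarith) h1a 2
      have hsz : s * z ^ 2 ≤ z ^ 2 :=
        (mul_le_of_le_one_left (sq_nonneg z) hs1)
      have hexp : (s + z ^ 2) ^ 2 = s ^ 2 + 2 * (s * z ^ 2) + z ^ 4 := by ring
      linarith [h1a2, hsz, hs2z, hz4, hexp, sq_nonneg z]
    · have haz : a = 0 := by
        rw [← ha, Real.sqrt_eq_zero']
        linarith
      rw [haz]
      linarith
  -- compute the moduli
  have h2 : (‖r₁ - r₂‖) ^ 2 = 4 * z ^ 2 := by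
    rw [hr₁, hr₂, Complex.sq_norm, Complex.normSq_apply]
    simp
    ring
  have h3 : (‖1 - r₁‖) ^ 2 = (1 - a) ^ 2 + z ^ 2 := by
    rw [hr₁, Complex.sq_norm, Complex.normSq_apply]
    simp
    ring
  rw [norm_div, div_pow, h2, h3]
  rw [div_le_iff₀ (by positivity)]
  linarith
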